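/- Let A be a finite nonempty set, X the simplex in ℝ^A with interior X°, v : X → ℝ^A continuous, and x* ∈ X a GESS of v. Let h be twice continuously differentiable on an open set containing X, with Hessian H(y) positive definite at each y ∈ X°. Let x : [0,∞) → X° be differentiable with x'(t) = V(x(t)) for all t, where V(y) is the H(y)-projection of H(y)⁻¹ v(y) onto ℝ₀^A = {z ∈ ℝ^A : ∑_α z_α = 0}, and suppose sup_{t ≥ 0} max_α |x'_α(t)| < ∞. Then x(t) → x* as t → ∞. -/

import Mathlib

open Matrix Filter

noncomputable section

/-- The relative interior of the simplex (all coordinates positive, summing to one). -/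
def intSimplex (A : Type*) [Fintype A] : Set (A → ℝ) :=
  {x | (∀ α, 0 < x α) ∧ (∑ α, x α) = 1}

/-- The quadratic form `wᵀ G w = ‖w‖_G²` associated to a matrix `G`. -/
def qform {A : Type*} [Fintype A] (G : Matrix A A ℝ) (w : A → ℝ) : ℝ :=
  w ⬝ᵥ G.mulVec w

/-- `V` is the `G`-projection of `w` onto `C`. -/
def IsGProj {A : Type*} [Fintype A] (G : Matrix A A ℝ) (C : Set (A → ℝ))
    (w V : A → ℝ) : Prop :=
  V ∈ C ∧ ∀ z ∈ C, qform G (w - V) ≤ qform G (w - z)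

/-- The Hessian matrix of `h` at `y`. -/
def hessMat {A : Type*} [Fintype A] [DecidableEq A] (h : (A → ℝ) → ℝ) (y : A → ℝ) :
    Matrix A A ℝ :=
  Matrix.of fun α β => fderiv ℝ (fderiv ℝ h) y (Pi.single α 1) (Pi.single β 1)

/-- A continuous bilinear form equals the dot-product form of its coefficient matrix. -/
lemma bilin_eq_dot {A : Type*} [Fintype A] [DecidableEq A]
    (B : (A → ℝ) →L[ℝ] ((A → ℝ) →L[ℝ] ℝ)) (u w : A → ℝ) :
    B u w = u ⬝ᵥ (Matrix.of fun α β => B (Pi.single α 1) (Pi.single β 1)).mulVec w := by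
  have hu : u = ∑ α, u α • (Pi.single α (1:ℝ) : A → ℝ) := by
    ext γ; simp [Pi.single_apply]
  have hw : w = ∑ β, w β • (Pi.single β (1:ℝ) : A → ℝ) := by
    ext γ; simp [Pi.single_apply]
  conv_lhs => rw [hu, hw]
  simp only [map_sum, _root_.map_smul, ContinuousLinearMap.sum_apply,
    ContinuousLinearMap.smul_apply, smul_eq_mul, Finset.mul_sum]
  simp only [dotProduct, Matrix.mulVec, Matrix.of_apply, Finset.mul_sum]
  rw [Finset.sum_comm]
  congr 1; ext α; congr 1; ext β; ring

/-- The `G`-projection onto the zero-sum hyperplane satisfies `V ⬝ G b = v ⬝ b` for all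
zero-sum vectors `b`. -/
lemma proj_orth {A : Type*} [Fintype A] [DecidableEq A] (G : Matrix A A ℝ) (hG : G.PosDef)
    (vv Vv : A → ℝ)
    (hproj : IsGProj G {z : A → ℝ | (∑ α, z α) = 0} (G⁻¹.mulVec vv) Vv)
    (b : A → ℝ) (hb : ∑ α, b α = 0) :
    Vv ⬝ᵥ G.mulVec b = vv ⬝ᵥ b := by
  set w : A → ℝ := G⁻¹.mulVec vv with hw
  set a : A → ℝ := w - Vv with ha
  have hsymm : Gᵀ = G := by
    rw [← conjTranspose_eq_transpose_of_trivial]; exact hG.isHermitian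
  have hdots : ∀ p q : A → ℝ, p ⬝ᵥ G.mulVec q = q ⬝ᵥ G.mulVec p := by
    intro p q
    rw [dotProduct_mulVec, ← mulVec_transpose, hsymm, dotProduct_comm]
  have hexp : ∀ s : ℝ, qform G (a - s • b)
      = qform G a - 2 * s * (a ⬝ᵥ G.mulVec b) + s ^ 2 * qform G b := by
    intro s
    have h1 := hdots b a
    simp only [qform, mulVec_sub, sub_dotProduct, dotProduct_sub, smul_dotProduct,
      dotProduct_smul, Matrix.mulVec_smul, smul_eq_mul] at *
    linear_combination (-s) * h1
  have hkey : ∀ s : ℝ, 0 ≤ -(2 * s * (a ⬝ᵥ G.mulVec b)) + s ^ 2 * qform G b := by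
    intro s
    have hz : Vv + s • b ∈ {z : A → ℝ | (∑ α, z α) = 0} := by
      have h1 := hproj.1
      simp only [Set.mem_setOf_eq] at h1 ⊢
      simp [Finset.sum_add_distrib, h1, ← Finset.mul_sum, hb]
    have h2 := hproj.2 _ hz
    have h3 : w - (Vv + s • b) = a - s • b := by rw [ha]; abel
    rw [h3, hexp s] at h2
    linarith
  have hc : a ⬝ᵥ G.mulVec b = 0 := by
    by_cases hb0 : b = 0
    · simp [hb0]
    · have hqb : 0 < qform G b := by simpa [qform] using hG.dotProduct_mulVec_pos hb0
      set c : ℝ := a ⬝ᵥ G.mulVec b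
      have := hkey (c / qform G b)
      have h4 : (c / qform G b) ^ 2 * qform G b = c ^ 2 / qform G b := by
        field_simp
      rw [h4] at this
      have h5 : 2 * (c / qform G b) * c = 2 * c ^ 2 / qform G b := by
        field_simp
      rw [h5] at this
      have heq : 2 * c ^ 2 / qform G b = 2 * (c ^ 2 / qform G b) := by ring
      rw [heq] at this
      have h8 : c ^ 2 / qform G b ≤ 0 := by linarith
      rcases div_nonpos_iff.mp h8 with ⟨h9, h10⟩ | ⟨h9, h10⟩
      · linarith
      · have h11 : c ^ 2 = 0 := le_antisymm h9 (sq_nonneg c)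
        exact pow_eq_zero_iff two_ne_zero |>.mp h11
  have hwb : w ⬝ᵥ G.mulVec b = vv ⬝ᵥ b := by
    have hdet : IsUnit G.det := isUnit_iff_ne_zero.mpr hG.det_pos.ne'
    rw [hw, hdots, mulVec_mulVec, mul_nonsing_inv G hdet, one_mulVec, dotProduct_comm]
  have hsplit : a ⬝ᵥ G.mulVec b = w ⬝ᵥ G.mulVec b - Vv ⬝ᵥ G.mulVec b := by
    rw [ha]; simp [sub_dotProduct]
  rw [hsplit] at hc
  linarith [hwb]

/-- convergence of interior solutions of continuous Hessian dynamics to a GESS.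
If `x : [0,∞) → X°` solves `x'(t) = V(x(t))`, where `V(y)` is the `H(y)`-projection of
`H(y)⁻¹ v(y)` onto `ℝ₀^A`, and the velocities are uniformly bounded, then `x(t) → x*`. -/
theorem stmt_10 {A : Type*} [Fintype A] [DecidableEq A] [Nonempty A]
    (v : (A → ℝ) → (A → ℝ)) (hvcont : ContinuousOn v (stdSimplex ℝ A))
    (xstar : A → ℝ) (hxstarX : xstar ∈ stdSimplex ℝ A)
    (hGESS : ∀ y ∈ stdSimplex ℝ A,
      v y ⬝ᵥ (y - xstar) ≤ 0 ∧ (v y ⬝ᵥ (y - xstar) = 0 → y = xstar))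
    (h : (A → ℝ) → ℝ) (U : Set (A → ℝ)) (hU : IsOpen U) (hXU : stdSimplex ℝ A ⊆ U)
    (hh : ContDiffOn ℝ 2 h U)
    (hpd : ∀ y ∈ intSimplex A, (hessMat h y).PosDef)
    (V : (A → ℝ) → (A → ℝ))
    (hV : ∀ y ∈ intSimplex A,
      IsGProj (hessMat h y) {z : A → ℝ | (∑ α, z α) = 0}
        ((hessMat h y)⁻¹.mulVec (v y)) (V y))
    (x : ℝ → (A → ℝ)) (hxint : ∀ t : ℝ, 0 ≤ t → x t ∈ intSimplex A)
    (hx' : ∀ t : ℝ, 0 ≤ t → HasDerivWithinAt x (V (x t)) (Set.Ici 0) t)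
    (hbdd : ∃ B : ℝ, ∀ t : ℝ, 0 ≤ t → ∀ α : A, |V (x t) α| ≤ B) :
    Tendsto (fun t => x t) atTop (nhds xstar) := by
  classical
  obtain ⟨B0, hB0⟩ := hbdd
  have hsubS : intSimplex A ⊆ stdSimplex ℝ A := fun y hy => ⟨fun α => (hy.1 α).le, hy.2⟩
  have hxS : ∀ t : ℝ, 0 ≤ t → x t ∈ stdSimplex ℝ A := fun t ht => hsubS (hxint t ht)
  have hxinU : ∀ t : ℝ, 0 ≤ t → x t ∈ U := fun t ht => hXU (hxS t ht)
  set φ : (A → ℝ) → ℝ := fun y => v y ⬝ᵥ (xstar - y) with hφdef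
  have hφ_eq : ∀ y, φ y = -(v y ⬝ᵥ (y - xstar)) := by
    intro y
    rw [hφdef]
    simp only
    rw [show xstar - y = -(y - xstar) by abel, dotProduct_neg]
  have hφ_nonneg : ∀ y ∈ stdSimplex ℝ A, 0 ≤ φ y := by
    intro y hy; rw [hφ_eq]; linarith [(hGESS y hy).1]
  have hφ_pos : ∀ y ∈ stdSimplex ℝ A, y ≠ xstar → 0 < φ y := by
    intro y hy hne
    rcases lt_or_eq_of_le (hGESS y hy).1 with hlt | heq
    · rw [hφ_eq]; linarith
    · exact absurd ((hGESS y hy).2 heq) hne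
  set D : ℝ → ℝ := fun t => h xstar - h (x t) - fderiv ℝ h (x t) (xstar - x t) with hDdef
  have hsum : ∀ t : ℝ, 0 ≤ t → ∑ α, (xstar - x t) α = 0 := by
    intro t ht
    have h1 := (hxint t ht).2
    have h2 := hxstarX.2
    simp [Pi.sub_apply, Finset.sum_sub_distrib, h1, h2]
  -- derivative of the Lyapunov function
  have hD : ∀ t ∈ Set.Ici (0:ℝ), HasDerivWithinAt D (-(φ (x t))) (Set.Ici 0) t := by
    intro t ht
    have ht' : (0:ℝ) ≤ t := ht
    have hcd : ContDiffAt ℝ 2 h (x t) := hh.contDiffAt (hU.mem_nhds (hxinU t ht'))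
    have ha : HasFDerivAt h (fderiv ℝ h (x t)) (x t) :=
      (hcd.differentiableAt (by norm_num)).hasFDerivAt
    have hb1 : ContDiffAt ℝ 1 (fderiv ℝ h) (x t) := hcd.fderiv_right (by norm_num)
    have hb : HasFDerivAt (fderiv ℝ h) (fderiv ℝ (fderiv ℝ h) (x t)) (x t) :=
      (hb1.differentiableAt (by norm_num)).hasFDerivAt
    have hxd := hx' t ht'
    have h1 : HasDerivWithinAt (fun s => h (x s)) (fderiv ℝ h (x t) (V (x t)))
        (Set.Ici 0) t := ha.comp_hasDerivWithinAt t hxd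
    have h2 : HasDerivWithinAt (fun s => fderiv ℝ h (x s))
        (fderiv ℝ (fderiv ℝ h) (x t) (V (x t))) (Set.Ici 0) t :=
      hb.comp_hasDerivWithinAt t hxd
    have h3 : HasDerivWithinAt (fun s => xstar - x s) (0 - V (x t)) (Set.Ici 0) t :=
      (hasDerivWithinAt_const t _ xstar).sub hxd
    have h4 := h2.clm_apply h3
    have h5 := ((hasDerivWithinAt_const t _ (h xstar)).sub h1).sub h4
    have hval : (0 - fderiv ℝ h (x t) (V (x t))) -
        (fderiv ℝ (fderiv ℝ h) (x t) (V (x t)) (xstar - x t)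
          + fderiv ℝ h (x t) (0 - V (x t)))
        = -(φ (x t)) := by
      have hB := bilin_eq_dot (fderiv ℝ (fderiv ℝ h) (x t)) (V (x t)) (xstar - x t)
      have hP := proj_orth (hessMat h (x t)) (hpd _ (hxint t ht')) (v (x t)) (V (x t))
        (hV _ (hxint t ht')) (xstar - x t) (hsum t ht')
      have hBP : fderiv ℝ (fderiv ℝ h) (x t) (V (x t)) (xstar - x t) = φ (x t) := by
        rw [hB]; exact hP
      have hms : fderiv ℝ h (x t) (0 - V (x t)) = 0 - fderiv ℝ h (x t) (V (x t)) := by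
        rw [map_sub, map_zero]
      rw [hms, hBP]
      ring
    rw [← hval]
    exact h5
  have hDcont : ContinuousOn D (Set.Ici 0) := fun t ht => (hD t ht).continuousWithinAt
  have hanti : AntitoneOn D (Set.Ici 0) := by
    apply antitoneOn_of_deriv_nonpos (convex_Ici 0) hDcont
    · intro t ht
      rw [interior_Ici] at ht
      exact ((hD t (le_of_lt ht : (0:ℝ) ≤ t)).hasDerivAt
        (Ici_mem_nhds ht)).differentiableAt.differentiableWithinAt
    · intro t ht
      rw [interior_Ici] at ht
      rw [((hD t (le_of_lt ht : (0:ℝ) ≤ t)).hasDerivAt (Ici_mem_nhds ht)).deriv]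
      have := hφ_nonneg _ (hxS t (le_of_lt ht))
      linarith
  -- lower bound
  have hFcont : ContinuousOn (fun y => h xstar - h y - fderiv ℝ h y (xstar - y))
      (stdSimplex ℝ A) := by
    apply ContinuousOn.sub
    · exact continuousOn_const.sub ((hh.continuousOn).mono hXU)
    · exact ((hh.continuousOn_fderiv_of_isOpen hU (by norm_num)).mono hXU).clm_apply
        ((continuous_const.sub continuous_id).continuousOn)
  obtain ⟨y0, hy0S, hy0min⟩ :=
    (isCompact_stdSimplex ℝ A).exists_isMinOn ⟨xstar, hxstarX⟩ hFcont
  set m : ℝ := h xstar - h y0 - fderiv ℝ h y0 (xstar - y0) with hm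
  have hmD : ∀ t : ℝ, 0 ≤ t → m ≤ D t := fun t ht => hy0min (hxS t ht)
  -- contradiction setup
  by_contra hcon
  rw [Metric.tendsto_atTop] at hcon
  push_neg at hcon
  obtain ⟨ε, hε, hfreq⟩ := hcon
  set K : Set (A → ℝ) := stdSimplex ℝ A ∩ {y | ε ≤ dist y xstar} with hK
  have hKcomp : IsCompact K := (isCompact_stdSimplex ℝ A).inter_right
    (isClosed_le continuous_const (continuous_id.dist continuous_const))
  have hstep : ∀ N : ℝ, 0 ≤ N → ∃ t, N ≤ t ∧ x t ∈ K := by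
    intro N hN
    obtain ⟨t, htN, htd⟩ := hfreq N
    exact ⟨t, htN, ⟨hxS t (hN.trans htN), htd⟩⟩
  have hKne : K.Nonempty := by
    obtain ⟨t, _, htK⟩ := hstep 0 le_rfl; exact ⟨x t, htK⟩
  have hφcont : ContinuousOn φ (stdSimplex ℝ A) := by
    have hrw : φ = fun y => ∑ α, v y α * (xstar α - y α) := by
      funext y; rw [hφdef]; rfl
    rw [hrw]
    apply continuousOn_finset_sum
    intro α _
    exact ((continuous_apply α).comp_continuousOn hvcont).mul
      ((continuous_const.sub (continuous_apply α)).continuousOn)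
  obtain ⟨y1, hy1K, hy1min⟩ := hKcomp.exists_isMinOn hKne
    (hφcont.mono (fun y hy => hy.1))
  set δ : ℝ := φ y1 with hδ
  have hy1ne : y1 ≠ xstar := by
    intro hEq
    have h2 := hy1K.2
    simp only [Set.mem_setOf_eq] at h2
    rw [hEq, dist_self] at h2
    linarith
  have hδpos : 0 < δ := hφ_pos y1 hy1K.1 hy1ne
  set L : ℝ := max B0 0 with hLdef
  have hL0 : (0:ℝ) ≤ L := le_max_right _ _
  have hLip : ∀ s u : ℝ, s ∈ Set.Ici (0:ℝ) → u ∈ Set.Ici (0:ℝ) →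
      ‖x s - x u‖ ≤ L * ‖s - u‖ := by
    intro s u hs hu
    refine Convex.norm_image_sub_le_of_norm_hasDerivWithin_le
      (fun r hr => hx' r hr) (fun r hr => ?_) (convex_Ici 0) hu hs
    rw [pi_norm_le_iff_of_nonneg hL0]
    intro α
    rw [Real.norm_eq_abs]
    exact (hB0 r hr α).trans (le_max_left _ _)
  have hUC := (isCompact_stdSimplex ℝ A).uniformContinuousOn_of_continuous hφcont
  rw [Metric.uniformContinuousOn_iff] at hUC
  obtain ⟨r, hr, hUC⟩ := hUC (δ/2) (by linarith)
  set η : ℝ := r / (L + 1) with hη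
  have hηpos : 0 < η := div_pos hr (by linarith)
  have hlow : ∀ a : ℝ, 0 ≤ a → x a ∈ K → ∀ s ∈ Set.Icc a (a + η), δ/2 ≤ φ (x s) := by
    intro a ha haK s hs
    have hs0 : 0 ≤ s := ha.trans hs.1
    have hdist : dist (x s) (x a) < r := by
      have h1 := hLip s a hs0 ha
      have h2 : ‖s - a‖ ≤ η := by
        rw [Real.norm_eq_abs, abs_of_nonneg (by linarith [hs.1])]
        linarith [hs.2]
      have h3 : L * η < r := by
        have hL1 : (0:ℝ) < L + 1 := by linarith
        rw [hη, mul_div_assoc']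
        rw [div_lt_iff₀ hL1]
        nlinarith
      calc dist (x s) (x a) = ‖x s - x a‖ := dist_eq_norm _ _
        _ ≤ L * ‖s - a‖ := h1
        _ ≤ L * η := mul_le_mul_of_nonneg_left h2 hL0
        _ < r := h3
    have h4 := hUC _ (hxS s hs0) _ (hxS a ha) hdist
    rw [Real.dist_eq] at h4
    have h5 : δ ≤ φ (x a) := hy1min haK
    have h6 := abs_lt.mp h4
    linarith [h6.1]
  have hdrop : ∀ a : ℝ, 0 ≤ a → x a ∈ K → D (a + η) ≤ D a - δ/2 * η := by
    intro a ha haK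
    have hE : AntitoneOn (fun s => D s + δ/2 * s) (Set.Icc a (a + η)) := by
      apply antitoneOn_of_deriv_nonpos (convex_Icc _ _)
      · exact (hDcont.mono (fun s hs => ha.trans hs.1)).add
          ((continuous_const.mul continuous_id).continuousOn)
      · intro s hs
        rw [interior_Icc] at hs
        have hs0 : 0 < s := lt_of_le_of_lt ha hs.1
        exact (((hD s hs0.le).hasDerivAt (Ici_mem_nhds hs0)).add
          ((hasDerivAt_id s).const_mul (δ/2))).differentiableAt.differentiableWithinAt
      · intro s hs
        rw [interior_Icc] at hs
        have hs0 : 0 < s := lt_of_le_of_lt ha hs.1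
        have hlin : HasDerivAt (fun y : ℝ => δ/2 * y) (δ/2) s := by
          simpa using (hasDerivAt_id s).const_mul (δ/2)
        have hder := ((hD s hs0.le).hasDerivAt (Ici_mem_nhds hs0)).add hlin
        rw [show (fun s => D s + δ/2 * s) = D + fun y => δ/2 * y from rfl, hder.deriv]
        have := hlow a ha haK s ⟨hs.1.le, hs.2.le⟩
        linarith
    have h6 : D (a + η) + δ/2 * (a + η) ≤ D a + δ/2 * a :=
      hE (Set.mem_Icc.mpr ⟨le_rfl, by linarith⟩)
        (Set.mem_Icc.mpr ⟨by linarith, le_rfl⟩) (by linarith)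
    have h7 : δ/2 * (a + η) = δ/2 * a + δ/2 * η := by ring
    linarith
  clear_value D φ δ η L m K
  obtain ⟨t0, ht0, ht0K⟩ := hstep 0 le_rfl
  have hiter : ∀ n : ℕ, ∃ t : ℝ, 0 ≤ t ∧ D t ≤ D t0 - n * (δ/2 * η) := by
    intro n
    induction n with
    | zero => exact ⟨t0, ht0, by simp⟩
    | succ k ih =>
      obtain ⟨t, htpos, htD⟩ := ih
      obtain ⟨t', htt', ht'K⟩ := hstep t htpos
      have ht'0 : 0 ≤ t' := htpos.trans htt'
      have h7 : D t' ≤ D t := hanti htpos ht'0 htt'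
      have h8 := hdrop t' ht'0 ht'K
      refine ⟨t' + η, by linarith, ?_⟩
      have h9 : ((k:ℝ) + 1) * (δ/2 * η) = (k:ℝ) * (δ/2 * η) + δ/2 * η := by ring
      push_cast
      linarith
  obtain ⟨n, hn⟩ := exists_nat_gt ((D t0 - m) / (δ/2 * η))
  obtain ⟨t, htpos, htD⟩ := hiter n
  have hmt := hmD t htpos
  have hcpos : 0 < δ/2 * η := by positivity
  rw [div_lt_iff₀ hcpos] at hn
  linarith
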